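/- Let M̄ ×_F Ñ be a warped product with 1-dimensional base (M̄,ḡ), ḡ₁₁ = ε, warping function F(x¹) = (ax¹+b)², and (n-1)-dimensional fibre (Ñ,g̃), n ≥ 4, satisfying condition (SR2) with the same constant a. Then the warped product satisfies R·C - C·R = (1/(n-2)) Q(S,R) on its whole domain. -/

import Mathlib

open Finset

noncomputable section

variable {ι : Type*}

/-- Kulkarni–Nomizu product of two symmetric (0,2)-tensors. -/
def KN2 (E T : ι → ι → ℝ) : ι → ι → ι → ι → ℝ :=
  fun a b c d => E a d * T b c + E b c * T a d - E a c * T b d - E b d * T a c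

/-- The tensor `G(X₁,X₂,X₃,X₄) = g(X₁,X₄)g(X₂,X₃) - g(X₁,X₃)g(X₂,X₄)`. -/
def Gten (g : ι → ι → ℝ) : ι → ι → ι → ι → ℝ :=
  fun a b c d => g a d * g b c - g a c * g b d

/-- Tachibana tensor `Q(A,T)` of a symmetric (0,2)-tensor `A` and a (0,4)-tensor `T`. -/
def Tach4 (A : ι → ι → ℝ) (T : ι → ι → ι → ι → ℝ) : ι → ι → ι → ι → ι → ι → ℝ :=
  fun h i j k l m =>
    A h l * T m i j k + A i l * T h m j k + A j l * T h i m k + A k l * T h i j m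
    - A h m * T l i j k - A i m * T h l j k - A j m * T h i l k - A k m * T h i j l

/-- Tachibana tensor `Q(A,S)` of two symmetric (0,2)-tensors. -/
def Tach2 (A S : ι → ι → ℝ) : ι → ι → ι → ι → ℝ :=
  fun i j l m => A i l * S j m + A j l * S i m - A i m * S j l - A j m * S i l

/-- Derivation action `B · T` on a (0,4)-tensor:
`(B·T)_{hijklm} = g^{pq}(T_{pijk}B_{qhlm} + T_{hpjk}B_{qilm} + T_{hipk}B_{qjlm} + T_{hijp}B_{qklm})`. -/
def dotT [Fintype ι] (ginv : ι → ι → ℝ) (B T : ι → ι → ι → ι → ℝ) :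
    ι → ι → ι → ι → ι → ι → ℝ :=
  fun h i j k l m => ∑ p, ∑ q, ginv p q *
    (T p i j k * B q h l m + T h p j k * B q i l m + T h i p k * B q j l m + T h i j p * B q k l m)

/-- Derivation action `B · S` on a symmetric (0,2)-tensor. -/
def dotS [Fintype ι] (ginv : ι → ι → ℝ) (B : ι → ι → ι → ι → ℝ) (S : ι → ι → ℝ) :
    ι → ι → ι → ι → ℝ :=
  fun i j l m => ∑ p, ∑ q, ginv p q * (S p j * B q i l m + S i p * B q j l m)

/-- Ricci contraction of a (0,4)-curvature tensor. -/
def Ricci [Fintype ι] (ginv : ι → ι → ℝ) (R : ι → ι → ι → ι → ℝ) : ι → ι → ℝ :=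
  fun i j => ∑ p, ∑ q, ginv p q * R p i j q

/-- Scalar curvature: full trace of a (0,2)-tensor. -/
def scal [Fintype ι] (ginv : ι → ι → ℝ) (S : ι → ι → ℝ) : ℝ := ∑ i, ∑ j, ginv i j * S i j

/-- Symmetries of a generalized curvature tensor. -/
def IsCurv (R : ι → ι → ι → ι → ℝ) : Prop :=
  (∀ a b c d, R a b c d = - R b a c d) ∧ (∀ a b c d, R a b c d = R c d a b) ∧
  (∀ a b c d, R a b c d + R b c a d + R c a b d = 0)

/-- `ginv` is a two-sided inverse of the metric `g`. -/
def IsInv [Fintype ι] [DecidableEq ι] (g ginv : ι → ι → ℝ) : Prop :=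
  (∀ i j, ∑ k, g i k * ginv k j = if i = j then (1:ℝ) else 0) ∧
  (∀ i j, ∑ k, ginv i k * g k j = if i = j then (1:ℝ) else 0)

/-- The Weyl conformal curvature tensor in dimension `d`:
`C = R - (1/(d-2)) g∧S + (κ/(2(d-1)(d-2))) g∧g`. -/
def Weyl (d : ℕ) (g : ι → ι → ℝ) (R : ι → ι → ι → ι → ℝ) (S : ι → ι → ℝ) (κ : ℝ) :
    ι → ι → ι → ι → ℝ :=
  fun a b c d' => R a b c d' - (1/((d:ℝ)-2)) * KN2 g S a b c d'
    + (κ/(2*((d:ℝ)-1)*((d:ℝ)-2))) * KN2 g g a b c d'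

/-- Metric of a warped product `M̄ ×_F Ñ` with 1-dimensional base: the index `none`
is the base direction (`g₁₁ = ε`), and `g_{αβ} = F g̃_{αβ}` on the fibre. -/
def wmet (m : ℕ) (ε F : ℝ) (gt : Fin m → Fin m → ℝ) :
    Option (Fin m) → Option (Fin m) → ℝ :=
  fun i j => match i, j with
  | none, none => ε
  | some a, some b => F * gt a b
  | _, _ => 0

/-- Inverse metric of the warped product. -/
def wmetInv (m : ℕ) (ε F : ℝ) (gtinv : Fin m → Fin m → ℝ) :
    Option (Fin m) → Option (Fin m) → ℝ :=
  fun i j => match i, j with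
  | none, none => ε
  | some a, some b => gtinv a b / F
  | _, _ => 0

/-- Curvature tensor of the warped product, components (W1):
`R_{α11β} = -(T₁₁/2) g̃_{αβ}`, `R_{αβγδ} = F(R̃_{αβγδ} - (Δ₁F/(4F)) G̃_{αβγδ})`,
where `D4F = Δ₁F/(4F)`, other components zero (up to curvature symmetries). -/
def wcurv (m : ℕ) (F T11 D4F : ℝ) (gt : Fin m → Fin m → ℝ)
    (Rt : Fin m → Fin m → Fin m → Fin m → ℝ) :
    Option (Fin m) → Option (Fin m) → Option (Fin m) → Option (Fin m) → ℝ :=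
  fun h i j k => match h, i, j, k with
  | some a, none, none, some d => -(T11 / 2) * gt a d
  | none, some b, some c, none => -(T11 / 2) * gt b c
  | some a, none, some c, none => T11 / 2 * gt a c
  | none, some b, none, some d => T11 / 2 * gt b d
  | some a, some b, some c, some d => F * (Rt a b c d - D4F * Gten gt a b c d)
  | _, _, _, _ => 0

/-- Ricci tensor of the warped product, components (W2); the fibre has dimension
`m = n - 1`:  `S₁₁ = -((n-1)/(2F)) T₁₁`,
`S_{αβ} = S̃_{αβ} - (tr T/2 + (n-2) Δ₁F/(4F)) g̃_{αβ}`. -/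
def wric (m : ℕ) (F T11 trT D4F : ℝ) (gt St : Fin m → Fin m → ℝ) :
    Option (Fin m) → Option (Fin m) → ℝ :=
  fun i j => match i, j with
  | none, none => -((m : ℝ) / (2 * F)) * T11
  | some a, some b => St a b - (trT / 2 + ((m : ℝ) - 1) * D4F) * gt a b
  | _, _ => 0

section Helpers

variable [Fintype ι]

lemma sum2_ext {f g : ι → ι → ℝ} (h : ∀ p q, f p q = g p q) :
    (∑ p, ∑ q, f p q) = ∑ p, ∑ q, g p q :=
  Finset.sum_congr rfl fun p _ => Finset.sum_congr rfl fun q _ => h p q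

lemma sum2_add' (f g : ι → ι → ℝ) :
    (∑ p, ∑ q, f p q) + (∑ p, ∑ q, g p q) = ∑ p, ∑ q, (f p q + g p q) := by
  simp [Finset.sum_add_distrib]

lemma sum2_sub' (f g : ι → ι → ℝ) :
    (∑ p, ∑ q, f p q) - (∑ p, ∑ q, g p q) = ∑ p, ∑ q, (f p q - g p q) := by
  simp [Finset.sum_sub_distrib]

lemma sum2_neg (f : ι → ι → ℝ) :
    (∑ p, ∑ q, (-(f p q))) = -(∑ p, ∑ q, f p q) := by
  simp

lemma sum2_mul (c : ℝ) (f : ι → ι → ℝ) :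
    c * (∑ p, ∑ q, f p q) = ∑ p, ∑ q, c * f p q := by
  simp [Finset.mul_sum]

lemma main_lemma (g ginv S : ι → ι → ℝ) (R C : ι → ι → ι → ι → ℝ) (e β γ : ℝ)
    (hgs : ∀ i j, g i j = g j i)
    (hgis : ∀ i j, ginv i j = ginv j i)
    (hSs : ∀ i j, S i j = S j i)
    (hanti : ∀ a b c d, R a b c d = -R b a c d)
    (hpair : ∀ a b c d, R a b c d = R c d a b)
    (hδ1 : ∀ (x : ι) (Y : ι → ℝ), (∑ p, ∑ q, ginv p q * (g p x * Y q)) = Y x)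
    (hM1 : ∀ x y z w, (∑ p, ∑ q, ginv p q * (S p x * R q y z w)) = e * R x y z w)
    (hC : ∀ a b c d, C a b c d = R a b c d - β * KN2 g S a b c d + γ * KN2 g g a b c d)
    (hγ : β * e = 2 * γ) :
    ∀ hh ii jj kk ll mm, dotT ginv R C hh ii jj kk ll mm - dotT ginv C R hh ii jj kk ll mm
      = β * Tach4 S R hh ii jj kk ll mm := by
  have hanti2 : ∀ a b c d, R a b c d = -R a b d c := fun a b c d => by
    rw [hpair a b c d, hanti c d a b, hpair d c a b]
  have hδ1b : ∀ (x : ι) (Y : ι → ℝ), (∑ p, ∑ q, ginv p q * (g x p * Y q)) = Y x := by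
    intro x Y
    exact (sum2_ext fun p q => by rw [hgs x p]).trans (hδ1 x Y)
  have hδ2 : ∀ (x : ι) (f : ι → ℝ), (∑ p, ∑ q, ginv p q * (f p * g q x)) = f x := by
    intro x f
    rw [← hδ1 x f, Finset.sum_comm]
    exact sum2_ext fun p q => by rw [hgis q p]; ring
  have hM1b : ∀ x y z w, (∑ p, ∑ q, ginv p q * (S x p * R q y z w)) = e * R x y z w := by
    intro x y z w
    exact (sum2_ext fun p q => by rw [hSs x p]).trans (hM1 x y z w)
  have hM2 : ∀ x y z w, (∑ p, ∑ q, ginv p q * (R p y z w * S q x)) = e * R x y z w := by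
    intro x y z w
    rw [← hM1 x y z w, Finset.sum_comm]
    exact sum2_ext fun p q => by rw [hgis q p]; ring
  have hM2s2 : ∀ x y z w, (∑ p, ∑ q, ginv p q * (R y p z w * S q x)) = -(e * R x y z w) := by
    intro x y z w
    calc (∑ p, ∑ q, ginv p q * (R y p z w * S q x))
        = ∑ p, ∑ q, (-(ginv p q * (R p y z w * S q x))) :=
          sum2_ext fun p q => by rw [hanti y p z w]; ring
      _ = -(∑ p, ∑ q, ginv p q * (R p y z w * S q x)) := sum2_neg _
      _ = -(e * R x y z w) := by rw [hM2]
  have hM2s3 : ∀ x y z w, (∑ p, ∑ q, ginv p q * (R y z p w * S q x)) = e * R x w y z := by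
    intro x y z w
    calc (∑ p, ∑ q, ginv p q * (R y z p w * S q x))
        = ∑ p, ∑ q, ginv p q * (R p w y z * S q x) :=
          sum2_ext fun p q => by rw [hpair y z p w]
      _ = e * R x w y z := hM2 x w y z
  have hM2s4 : ∀ x y z w, (∑ p, ∑ q, ginv p q * (R y z w p * S q x)) = -(e * R x w y z) := by
    intro x y z w
    calc (∑ p, ∑ q, ginv p q * (R y z w p * S q x))
        = ∑ p, ∑ q, (-(ginv p q * (R p w y z * S q x))) :=
          sum2_ext fun p q => by rw [hpair y z w p, hanti w p y z]; ring
      _ = -(∑ p, ∑ q, ginv p q * (R p w y z * S q x)) := sum2_neg _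
      _ = -(e * R x w y z) := by rw [hM2]
  -- The four evaluation lemmas
  have L1 : ∀ hh ii jj kk ll mm, dotT ginv R (KN2 g g) hh ii jj kk ll mm = 0 := by
    intro hh ii jj kk ll mm
    have step : dotT ginv R (KN2 g g) hh ii jj kk ll mm
        = ∑ p, ∑ q,
          (ginv p q * (g p kk * ((2*g ii jj) * R q hh ll mm))
          + ginv p q * (g p jj * ((-(2*g ii kk)) * R q hh ll mm))
          + ginv p q * (g p jj * ((2*g hh kk) * R q ii ll mm))
          + ginv p q * (g p kk * ((-(2*g hh jj)) * R q ii ll mm))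
          + ginv p q * (g ii p * ((2*g hh kk) * R q jj ll mm))
          + ginv p q * (g hh p * ((-(2*g ii kk)) * R q jj ll mm))
          + ginv p q * (g hh p * ((2*g ii jj) * R q kk ll mm))
          + ginv p q * (g ii p * ((-(2*g hh jj)) * R q kk ll mm))) := by
      simp only [dotT, KN2]
      exact sum2_ext fun p q => by ring
    rw [step]
    simp only [Finset.sum_add_distrib, hδ1, hδ1b]
    linear_combination (2*g ii jj) * hanti kk hh ll mm + (-(2*g ii kk)) * hanti jj hh ll mm
      + (2*g hh kk) * hanti jj ii ll mm + (-(2*g hh jj)) * hanti kk ii ll mm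
  have L2 : ∀ hh ii jj kk ll mm, dotT ginv (KN2 g g) R hh ii jj kk ll mm
      = 2 * Tach4 g R hh ii jj kk ll mm := by
    intro hh ii jj kk ll mm
    have step : dotT ginv (KN2 g g) R hh ii jj kk ll mm
        = ∑ p, ∑ q,
          (ginv p q * (((2*g hh ll) * R p ii jj kk) * g q mm)
          + ginv p q * (((-(2*g hh mm)) * R p ii jj kk) * g q ll)
          + ginv p q * (((2*g ii ll) * R hh p jj kk) * g q mm)
          + ginv p q * (((-(2*g ii mm)) * R hh p jj kk) * g q ll)
          + ginv p q * (((2*g jj ll) * R hh ii p kk) * g q mm)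
          + ginv p q * (((-(2*g jj mm)) * R hh ii p kk) * g q ll)
          + ginv p q * (((2*g kk ll) * R hh ii jj p) * g q mm)
          + ginv p q * (((-(2*g kk mm)) * R hh ii jj p) * g q ll)) := by
      simp only [dotT, KN2]
      exact sum2_ext fun p q => by ring
    rw [step]
    simp only [Finset.sum_add_distrib, hδ2]
    simp only [Tach4]
    ring
  have L3 : ∀ hh ii jj kk ll mm, dotT ginv R (KN2 g S) hh ii jj kk ll mm = 0 := by
    intro hh ii jj kk ll mm
    have step : dotT ginv R (KN2 g S) hh ii jj kk ll mm
        = ∑ p, ∑ q,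
          (ginv p q * (g p kk * (S ii jj * R q hh ll mm))
          + (g ii jj) * (ginv p q * (S p kk * R q hh ll mm))
          + ginv p q * (g p jj * ((-(S ii kk)) * R q hh ll mm))
          + (-(g ii kk)) * (ginv p q * (S p jj * R q hh ll mm))
          + (g hh kk) * (ginv p q * (S p jj * R q ii ll mm))
          + ginv p q * (g p jj * (S hh kk * R q ii ll mm))
          + (-(g hh jj)) * (ginv p q * (S p kk * R q ii ll mm))
          + ginv p q * (g p kk * ((-(S hh jj)) * R q ii ll mm))
          + (g hh kk) * (ginv p q * (S ii p * R q jj ll mm))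
          + ginv p q * (g ii p * (S hh kk * R q jj ll mm))
          + ginv p q * (g hh p * ((-(S ii kk)) * R q jj ll mm))
          + (-(g ii kk)) * (ginv p q * (S hh p * R q jj ll mm))
          + ginv p q * (g hh p * (S ii jj * R q kk ll mm))
          + (g ii jj) * (ginv p q * (S hh p * R q kk ll mm))
          + (-(g hh jj)) * (ginv p q * (S ii p * R q kk ll mm))
          + ginv p q * (g ii p * ((-(S hh jj)) * R q kk ll mm))) := by
      simp only [dotT, KN2]
      exact sum2_ext fun p q => by ring
    rw [step]
    simp only [Finset.sum_add_distrib, ← sum2_mul, hδ1, hδ1b, hM1, hM1b]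
    linear_combination (S ii jj + e * g ii jj) * hanti kk hh ll mm
      + (-(S ii kk + e*g ii kk)) * hanti jj hh ll mm
      + (S hh kk + e*g hh kk) * hanti jj ii ll mm
      + (-(S hh jj + e*g hh jj)) * hanti kk ii ll mm
  have L4 : ∀ hh ii jj kk ll mm, dotT ginv (KN2 g S) R hh ii jj kk ll mm
      = Tach4 S R hh ii jj kk ll mm + e * Tach4 g R hh ii jj kk ll mm := by
    intro hh ii jj kk ll mm
    have hc1 : R mm jj hh ii = -R hh ii jj mm := by
      rw [hpair mm jj hh ii, hanti2 hh ii mm jj]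
    have hc2 : R ll jj hh ii = -R hh ii jj ll := by
      rw [hpair ll jj hh ii, hanti2 hh ii ll jj]
    have step : dotT ginv (KN2 g S) R hh ii jj kk ll mm
        = ∑ p, ∑ q,
          (ginv p q * ((S hh ll * R p ii jj kk) * g q mm)
          + (g hh ll) * (ginv p q * (R p ii jj kk * S q mm))
          + ginv p q * (((-(S hh mm)) * R p ii jj kk) * g q ll)
          + (-(g hh mm)) * (ginv p q * (R p ii jj kk * S q ll))
          + ginv p q * ((S ii ll * R hh p jj kk) * g q mm)
          + (g ii ll) * (ginv p q * (R hh p jj kk * S q mm))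
          + ginv p q * (((-(S ii mm)) * R hh p jj kk) * g q ll)
          + (-(g ii mm)) * (ginv p q * (R hh p jj kk * S q ll))
          + ginv p q * ((S jj ll * R hh ii p kk) * g q mm)
          + (g jj ll) * (ginv p q * (R hh ii p kk * S q mm))
          + ginv p q * (((-(S jj mm)) * R hh ii p kk) * g q ll)
          + (-(g jj mm)) * (ginv p q * (R hh ii p kk * S q ll))
          + ginv p q * ((S kk ll * R hh ii jj p) * g q mm)
          + (g kk ll) * (ginv p q * (R hh ii jj p * S q mm))
          + ginv p q * (((-(S kk mm)) * R hh ii jj p) * g q ll)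
          + (-(g kk mm)) * (ginv p q * (R hh ii jj p * S q ll))) := by
      simp only [dotT, KN2]
      exact sum2_ext fun p q => by ring
    rw [step]
    simp only [Finset.sum_add_distrib, ← sum2_mul, hδ2, hM2, hM2s2, hM2s3, hM2s4]
    simp only [Tach4]
    linear_combination (-(e*g ii ll)) * hanti mm hh jj kk + (e*g ii mm) * hanti ll hh jj kk
      + (e*g jj ll) * hpair mm kk hh ii + (-(e*g jj mm)) * hpair ll kk hh ii
      + (-(e*g kk ll)) * hc1 + (e*g kk mm) * hc2
  intro hh ii jj kk ll mm
  have hx1 : dotT ginv R C hh ii jj kk ll mm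
      = dotT ginv R R hh ii jj kk ll mm - β * dotT ginv R (KN2 g S) hh ii jj kk ll mm
        + γ * dotT ginv R (KN2 g g) hh ii jj kk ll mm := by
    simp only [dotT, hC, sum2_mul]
    rw [sum2_sub', sum2_add']
    exact sum2_ext fun p q => by ring
  have hx2 : dotT ginv C R hh ii jj kk ll mm
      = dotT ginv R R hh ii jj kk ll mm - β * dotT ginv (KN2 g S) R hh ii jj kk ll mm
        + γ * dotT ginv (KN2 g g) R hh ii jj kk ll mm := by
    simp only [dotT, hC, sum2_mul]
    rw [sum2_sub', sum2_add']
    exact sum2_ext fun p q => by ring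
  rw [hx1, hx2, L1 hh ii jj kk ll mm, L2 hh ii jj kk ll mm, L3 hh ii jj kk ll mm,
    L4 hh ii jj kk ll mm]
  linear_combination (Tach4 g R hh ii jj kk ll mm) * hγ

end Helpers
/-- Theorem 4.2: a warped product with 1-dimensional base, warping function
`F(x¹) = (a x¹ + b)²`, and fibre satisfying condition (SR2) (with the same `a`),
satisfies `R·C - C·R = (1/(n-2)) Q(S,R)`.  The warped product is encoded pointwise
(point `x¹ = t`) through its curvature components (W1), (W2); `m = n - 1`. -/
theorem stmt16 {m : ℕ} (hm : 3 ≤ m) (ε : ℝ) (hε : ε = 1 ∨ ε = -1)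
    (a b t : ℝ) (hpos : 0 < (a * t + b) ^ 2)
    (gt gtinv : Fin m → Fin m → ℝ)
    (hgsym : ∀ i j, gt i j = gt j i) (hginv : IsInv gt gtinv)
    (Rt : Fin m → Fin m → Fin m → Fin m → ℝ) (hRt : IsCurv Rt)
    (St : Fin m → Fin m → ℝ) (hSt : St = Ricci gtinv Rt)
    (κt : ℝ) (hκt : κt = scal gtinv St)
    (hSR2 : ∀ μ' β γ δ, (∑ p, ∑ q, gtinv p q * St q μ' * Rt p β γ δ) =
      κt / (m : ℝ) * Rt μ' β γ δ
      + ε * a ^ 2 * (gt β γ * St μ' δ - gt β δ * St μ' γ)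
      - ε * κt * a ^ 2 / (m : ℝ) * Gten gt μ' β γ δ)
    (F F' F'' T11 trT D4F : ℝ)
    (hFdef : F = (a * t + b) ^ 2) (hF' : F' = 2 * a * (a * t + b)) (hF'' : F'' = 2 * a ^ 2)
    (hT11 : T11 = F'' - F' ^ 2 / (2 * F)) (htrT : trT = ε * T11)
    (hD4F : D4F = ε * F' ^ 2 / (4 * F))
    (g ginv : Option (Fin m) → Option (Fin m) → ℝ)
    (hg : g = wmet m ε F gt) (hgi : ginv = wmetInv m ε F gtinv)
    (R : Option (Fin m) → Option (Fin m) → Option (Fin m) → Option (Fin m) → ℝ)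
    (hRdef : R = wcurv m F T11 D4F gt Rt)
    (S : Option (Fin m) → Option (Fin m) → ℝ) (hSdef : S = wric m F T11 trT D4F gt St)
    (κ : ℝ) (hκ : κ = scal ginv S)
    (C : Option (Fin m) → Option (Fin m) → Option (Fin m) → Option (Fin m) → ℝ)
    (hCdef : C = Weyl (m + 1) g R S κ) :
    ∀ h i j k l m', dotT ginv R C h i j k l m' - dotT ginv C R h i j k l m' =
      1 / ((m : ℝ) - 1) * Tach4 S R h i j k l m' := by
  -- scalar facts
  have hpos' : ((a*t+b)^2 : ℝ) ≠ 0 := ne_of_gt hpos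
  have hFne : F ≠ 0 := by rw [hFdef]; exact hpos'
  have hT0 : T11 = 0 := by
    rw [hT11, hF'', hF', hFdef, sub_eq_zero, eq_div_iff (mul_ne_zero two_ne_zero hpos')]; ring
  have hD4 : D4F = ε * a ^ 2 := by
    rw [hD4F, hF', hFdef, div_eq_iff (mul_ne_zero four_ne_zero hpos')]; ring
  have hε2 : ε * ε = 1 := by rcases hε with h | h <;> rw [h] <;> norm_num
  have hmR : (3:ℝ) ≤ (m:ℝ) := by exact_mod_cast hm
  have hm0 : (m:ℝ) ≠ 0 := by linarith
  have hm1 : (m:ℝ) - 1 ≠ 0 := by linarith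
  -- fibre inverse symmetric
  have hgis : ∀ u v, gtinv u v = gtinv v u := by
    intro u v
    have step1 : ∀ c, (∑ k, gt c k * gtinv v k) = if c = v then (1:ℝ) else 0 := by
      intro c
      calc (∑ k, gt c k * gtinv v k) = ∑ k, gtinv v k * gt k c :=
            Finset.sum_congr rfl fun k _ => by rw [hgsym c k]; ring
        _ = if v = c then 1 else 0 := hginv.2 v c
        _ = if c = v then 1 else 0 := by simp [eq_comm]
    calc gtinv u v = ∑ c, gtinv u c * (if c = v then (1:ℝ) else 0) := by simp
      _ = ∑ c, gtinv u c * ∑ k, gt c k * gtinv v k :=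
            Finset.sum_congr rfl fun c _ => by rw [step1 c]
      _ = ∑ c, ∑ k, gtinv u c * (gt c k * gtinv v k) :=
            Finset.sum_congr rfl fun c _ => by rw [Finset.mul_sum]
      _ = ∑ k, ∑ c, gtinv u c * (gt c k * gtinv v k) := Finset.sum_comm
      _ = ∑ k, (∑ c, gtinv u c * gt c k) * gtinv v k :=
            Finset.sum_congr rfl fun k _ => by
              rw [Finset.sum_mul]; exact Finset.sum_congr rfl fun c _ => by ring
      _ = ∑ k, (if u = k then (1:ℝ) else 0) * gtinv v k :=
            Finset.sum_congr rfl fun k _ => by rw [hginv.2 u k]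
      _ = gtinv v u := by simp
  -- fibre delta lemmas
  have dl1 : ∀ (x : Fin m) (Y : Fin m → ℝ), (∑ p, ∑ q, gtinv p q * (gt p x * Y q)) = Y x := by
    intro x Y
    calc (∑ p, ∑ q, gtinv p q * (gt p x * Y q))
        = ∑ q, ∑ p, gtinv p q * (gt p x * Y q) := Finset.sum_comm
      _ = ∑ q, (∑ p, gt x p * gtinv p q) * Y q :=
          Finset.sum_congr rfl fun q _ => by
            rw [Finset.sum_mul]
            exact Finset.sum_congr rfl fun p _ => by rw [hgsym x p]; ring
      _ = ∑ q, (if x = q then (1:ℝ) else 0) * Y q :=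
          Finset.sum_congr rfl fun q _ => by rw [hginv.1 x q]
      _ = Y x := by simp
  have dl2 : ∀ (x : Fin m) (f : Fin m → ℝ), (∑ p, ∑ q, gtinv p q * (f p * gt q x)) = f x := by
    intro x f
    rw [← dl1 x f, Finset.sum_comm]
    exact sum2_ext fun p q => by rw [hgis q p]; ring
  -- St symmetric
  have hRt4 : ∀ a' b' c' d', Rt a' b' c' d' = -Rt a' b' d' c' := fun a' b' c' d' => by
    rw [hRt.2.1 a' b' c' d', hRt.1 c' d' a' b', hRt.2.1 d' c' a' b']
  have hSts : ∀ u v, St u v = St v u := by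
    intro u v
    rw [hSt]
    simp only [Ricci]
    calc (∑ p, ∑ q, gtinv p q * Rt p u v q)
        = ∑ p, ∑ q, gtinv p q * Rt q v u p := sum2_ext fun p q => by
            rw [hRt.2.1 p u v q, hRt.1 v q p u, hRt4 q v p u]; ring
      _ = ∑ q, ∑ p, gtinv p q * Rt q v u p := Finset.sum_comm
      _ = ∑ p, ∑ q, gtinv p q * Rt p v u q := sum2_ext fun p q => by rw [hgis q p]
  -- component lemmas
  have hgnn : g none none = ε := by rw [hg]; rfl
  have hgns : ∀ v : Fin m, g none (some v) = 0 := fun v => by rw [hg]; rfl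
  have hgsn : ∀ u : Fin m, g (some u) none = 0 := fun u => by rw [hg]; rfl
  have hgss : ∀ u v, g (some u) (some v) = F * gt u v := fun u v => by rw [hg]; rfl
  have hginn : ginv none none = ε := by rw [hgi]; rfl
  have hgins : ∀ v : Fin m, ginv none (some v) = 0 := fun v => by rw [hgi]; rfl
  have hgisn : ∀ u : Fin m, ginv (some u) none = 0 := fun u => by rw [hgi]; rfl
  have hgiss : ∀ u v, ginv (some u) (some v) = gtinv u v / F := fun u v => by rw [hgi]; rfl
  have hSnn : S none none = 0 := by rw [hSdef]; show -((m : ℝ) / (2 * F)) * T11 = 0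
                                    rw [hT0]; ring
  have hSns : ∀ v : Fin m, S none (some v) = 0 := fun v => by rw [hSdef]; rfl
  have hSsn : ∀ u : Fin m, S (some u) none = 0 := fun u => by rw [hSdef]; rfl
  have hSss : ∀ u v, S (some u) (some v)
      = St u v - ((m:ℝ)-1) * (ε * a ^ 2) * gt u v := by
    intro u v
    rw [hSdef]
    show St u v - (trT / 2 + ((m : ℝ) - 1) * D4F) * gt u v = _
    rw [htrT, hT0, hD4]; ring
  have hS0r : ∀ p, S p none = 0 := by
    intro p; rcases p with _ | u
    · exact hSnn
    · exact hSsn u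
  have hRssl : ∀ u v x y, R (some u) (some v) (some x) (some y)
      = F * (Rt u v x y - (ε * a ^ 2) * Gten gt u v x y) := by
    intro u v x y
    rw [hRdef]
    show F * (Rt u v x y - D4F * Gten gt u v x y) = _
    rw [hD4]
  have hR0a : ∀ i2 i3 i4, R none i2 i3 i4 = 0 := by
    intro i2 i3 i4; rw [hRdef]
    rcases i2 with _ | u <;> rcases i3 with _ | x <;> rcases i4 with _ | y <;>
      simp [wcurv, hT0]
  have hR0b : ∀ i1 i3 i4, R i1 none i3 i4 = 0 := by
    intro i1 i3 i4; rw [hRdef]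
    rcases i1 with _ | u <;> rcases i3 with _ | x <;> rcases i4 with _ | y <;>
      simp [wcurv, hT0]
  have hR0c : ∀ i1 i2 i4, R i1 i2 none i4 = 0 := by
    intro i1 i2 i4; rw [hRdef]
    rcases i1 with _ | u <;> rcases i2 with _ | x <;> rcases i4 with _ | y <;>
      simp [wcurv, hT0]
  have hR0d : ∀ i1 i2 i3, R i1 i2 i3 none = 0 := by
    intro i1 i2 i3; rw [hRdef]
    rcases i1 with _ | u <;> rcases i2 with _ | x <;> rcases i3 with _ | y <;>
      simp [wcurv, hT0]
  -- Gten symmetries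
  have hGanti : ∀ u v x y, Gten gt u v x y = -Gten gt v u x y := fun u v x y => by
    simp only [Gten]; ring
  have hGpair : ∀ u v x y, Gten gt u v x y = Gten gt x y u v := fun u v x y => by
    simp only [Gten]; rw [hgsym u y, hgsym v x, hgsym u x, hgsym v y]; ring
  -- Option-level symmetries
  have hgsO : ∀ i j, g i j = g j i := by
    intro i j
    rcases i with _ | u <;> rcases j with _ | v
    · rfl
    · rw [hgns, hgsn]
    · rw [hgsn, hgns]
    · rw [hgss, hgss, hgsym u v]
  have hgiO : ∀ i j, ginv i j = ginv j i := by
    intro i j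
    rcases i with _ | u <;> rcases j with _ | v
    · rfl
    · rw [hgins, hgisn]
    · rw [hgisn, hgins]
    · rw [hgiss, hgiss, hgis u v]
  have hSsO : ∀ i j, S i j = S j i := by
    intro i j
    rcases i with _ | u <;> rcases j with _ | v
    · rfl
    · rw [hSns, hSsn]
    · rw [hSsn, hSns]
    · rw [hSss, hSss, hSts u v, hgsym u v]
  have hantiO : ∀ i1 i2 i3 i4, R i1 i2 i3 i4 = -R i2 i1 i3 i4 := by
    intro i1 i2 i3 i4
    rcases i1 with _ | u
    · rw [hR0a, hR0b]; ring
    rcases i2 with _ | v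
    · rw [hR0b, hR0a]; ring
    rcases i3 with _ | x
    · rw [hR0c, hR0c]; ring
    rcases i4 with _ | y
    · rw [hR0d, hR0d]; ring
    rw [hRssl, hRssl]
    linear_combination F * hRt.1 u v x y + (-(F*(ε*a^2))) * hGanti u v x y
  have hpairO : ∀ i1 i2 i3 i4, R i1 i2 i3 i4 = R i3 i4 i1 i2 := by
    intro i1 i2 i3 i4
    rcases i1 with _ | u
    · rw [hR0a, hR0c]
    rcases i2 with _ | v
    · rw [hR0b, hR0d]
    rcases i3 with _ | x
    · rw [hR0c, hR0a]
    rcases i4 with _ | y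
    · rw [hR0d, hR0b]
    rw [hRssl, hRssl]
    linear_combination F * hRt.2.1 u v x y + (-(F*(ε*a^2))) * hGpair u v x y
  -- Option-level delta
  have hδ1O : ∀ (x : Option (Fin m)) (Y : Option (Fin m) → ℝ),
      (∑ p, ∑ q, ginv p q * (g p x * Y q)) = Y x := by
    intro x Y
    rcases x with _ | c
    · simp only [Fintype.sum_option, hginn, hgins, hgisn, hgiss, hgnn, hgsn]
      simp only [mul_zero, zero_mul, mul_comm, Finset.sum_const_zero, add_zero, zero_add]
      linear_combination Y none * hε2
    · simp only [Fintype.sum_option, hginn, hgins, hgisn, hgiss, hgns, hgss]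
      simp only [mul_zero, zero_mul, Finset.sum_const_zero, add_zero, zero_add]
      calc (∑ u, ∑ v, gtinv u v / F * (F * gt u c * Y (some v)))
          = ∑ u, ∑ v, gtinv u v * (gt u c * Y (some v)) :=
            sum2_ext fun u v => by field_simp
        _ = Y (some c) := dl1 c fun v => Y (some v)
  -- fibre (SR2) reoriented
  have hAfib : ∀ c y z w, (∑ p, ∑ q, gtinv p q * (St p c * Rt q y z w))
      = κt / (m:ℝ) * Rt c y z w + ε * a ^ 2 * (gt y z * St c w - gt y w * St c z)
        - ε * κt * a ^ 2 / (m:ℝ) * Gten gt c y z w := by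
    intro c y z w
    rw [← hSR2 c y z w, Finset.sum_comm]
    exact sum2_ext fun p q => by rw [hgis q p]; ring
  have hSGfib : ∀ c y z w, (∑ p, ∑ q, gtinv p q * (St p c * Gten gt q y z w))
      = gt y z * St c w - gt y w * St c z := by
    intro c y z w
    have split : (∑ p, ∑ q, gtinv p q * (St p c * Gten gt q y z w))
        = (gt y z) * (∑ p, ∑ q, gtinv p q * (St p c * gt q w))
          - (gt y w) * (∑ p, ∑ q, gtinv p q * (St p c * gt q z)) := by
      simp only [sum2_mul]
      rw [sum2_sub']
      exact sum2_ext fun p q => by simp only [Gten]; ring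
    rw [split]
    simp only [dl2]
    rw [hSts w c, hSts z c]
  have hMfib : ∀ c y z w, (∑ p, ∑ q, gtinv p q *
        ((St p c - ((m:ℝ)-1) * (ε * a ^ 2) * gt p c)
          * (Rt q y z w - (ε * a ^ 2) * Gten gt q y z w)))
      = (κt / (m:ℝ) - ((m:ℝ)-1) * (ε * a ^ 2))
          * (Rt c y z w - (ε * a ^ 2) * Gten gt c y z w) := by
    intro c y z w
    have split : (∑ p, ∑ q, gtinv p q *
          ((St p c - ((m:ℝ)-1) * (ε * a ^ 2) * gt p c)
            * (Rt q y z w - (ε * a ^ 2) * Gten gt q y z w)))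
        = (∑ p, ∑ q, gtinv p q * (St p c * Rt q y z w))
          - (ε * a ^ 2) * (∑ p, ∑ q, gtinv p q * (St p c * Gten gt q y z w))
          - (((m:ℝ)-1) * (ε * a ^ 2)) * (∑ p, ∑ q, gtinv p q * (gt p c * Rt q y z w))
          + (((m:ℝ)-1) * (ε * a ^ 2) * (ε * a ^ 2))
              * (∑ p, ∑ q, gtinv p q * (gt p c * Gten gt q y z w)) := by
      simp only [sum2_mul]
      rw [sum2_sub', sum2_sub', sum2_add']
      exact sum2_ext fun p q => by ring
    rw [split, hAfib c y z w, hSGfib c y z w]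
    simp only [dl1]
    ring
  -- trace and κ
  have htr : (∑ p : Fin m, ∑ q, gtinv p q * gt p q) = (m:ℝ) := by
    calc (∑ p : Fin m, ∑ q, gtinv p q * gt p q)
        = ∑ p : Fin m, ∑ q, gtinv p q * gt q p := sum2_ext fun p q => by rw [hgsym p q]
      _ = ∑ p : Fin m, (if p = p then (1:ℝ) else 0) :=
          Finset.sum_congr rfl fun p _ => hginv.2 p p
      _ = (m:ℝ) := by simp
  have hκt' : (∑ p : Fin m, ∑ q, gtinv p q * St p q) = κt := by rw [hκt]; rfl
  obtain ⟨eV, heV⟩ : ∃ eV : ℝ, eV = (κt / (m:ℝ) - ((m:ℝ)-1) * (ε * a ^ 2)) / F := ⟨_, rfl⟩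
  have hκm : κ = (m:ℝ) * eV := by
    rw [hκ]
    show (∑ i, ∑ j, ginv i j * S i j) = (m:ℝ) * eV
    simp only [Fintype.sum_option, hginn, hgins, hgisn, hgiss, hSnn, hSns, hSsn, hSss]
    simp only [mul_zero, zero_mul, Finset.sum_const_zero, add_zero, zero_add]
    have split : (∑ u : Fin m, ∑ v, gtinv u v / F * (St u v - ((m:ℝ)-1) * (ε * a ^ 2) * gt u v))
        = (1/F) * (∑ u : Fin m, ∑ v, gtinv u v * St u v)
          - (((m:ℝ)-1) * (ε * a ^ 2) / F) * (∑ u : Fin m, ∑ v, gtinv u v * gt u v) := by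
      simp only [sum2_mul]
      rw [sum2_sub']
      exact sum2_ext fun u v => by field_simp
    rw [split, htr, hκt', heV]
    field_simp
  -- master lemma, Option level
  have hM1O : ∀ x y z w, (∑ p, ∑ q, ginv p q * (S p x * R q y z w)) = eV * R x y z w := by
    intro x y z w
    rcases y with _ | y
    · simp [hR0b]
    rcases z with _ | z
    · simp [hR0c]
    rcases w with _ | w
    · simp [hR0d]
    rcases x with _ | c
    · simp [hS0r, hR0a]
    simp only [Fintype.sum_option, hginn, hgins, hgisn, hgiss, hSns, hSss, hRssl]
    simp only [mul_zero, zero_mul, Finset.sum_const_zero, add_zero, zero_add]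
    calc (∑ u, ∑ v, gtinv u v / F * ((St u c - ((m:ℝ)-1) * (ε * a ^ 2) * gt u c)
            * (F * (Rt v y z w - ε * a ^ 2 * Gten gt v y z w))))
        = ∑ u, ∑ v, gtinv u v * ((St u c - ((m:ℝ)-1) * (ε * a ^ 2) * gt u c)
            * (Rt v y z w - (ε * a ^ 2) * Gten gt v y z w)) :=
          sum2_ext fun u v => by field_simp
      _ = (κt / (m:ℝ) - ((m:ℝ)-1) * (ε * a ^ 2))
            * (Rt c y z w - (ε * a ^ 2) * Gten gt c y z w) := hMfib c y z w
      _ = eV * (F * (Rt c y z w - ε * a ^ 2 * Gten gt c y z w)) := by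
          rw [heV]; field_simp
  -- Weyl decomposition
  have hCO : ∀ a' b' c' d', C a' b' c' d' = R a' b' c' d'
      - (1/((m:ℝ)-1)) * KN2 g S a' b' c' d'
      + (κ/(2*(m:ℝ)*((m:ℝ)-1))) * KN2 g g a' b' c' d' := by
    intro a' b' c' d'
    rw [hCdef]
    simp only [Weyl]
    push_cast
    ring
  have hγ' : (1/((m:ℝ)-1)) * eV = 2 * (κ/(2*(m:ℝ)*((m:ℝ)-1))) := by
    rw [hκm]; field_simp
  exact main_lemma g ginv S R C eV (1/((m:ℝ)-1)) (κ/(2*(m:ℝ)*((m:ℝ)-1)))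
    hgsO hgiO hSsO hantiO hpairO hδ1O hM1O hCO hγ'
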